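/- arXiv:1105.2969 — 2 statements merged into one kernel-verified Lean document; each statement's English description precedes it below -/
import Mathlib

section
/- Let J, R be anticommuting fundamental symmetries on H and J_α, J_β, J_γ the fundamental symmetries associated to three linearly independent unit vectors α, β, γ ∈ ℝ³. If a bounded operator A satisfies J_α A* = A J_α, J_β A* = A J_β, and J_γ A* = A J_γ, then A is self-adjoint. -/
/-- The fundamental symmetry `J_α = α₁J + α₂R + α₃ iJR` associated with `α ∈ S²`. -/
noncomputable def Jvec {H : Type*} [NormedAddCommGroup H] [InnerProductSpace ℂ H]
    (J R : H →L[ℂ] H) (a1 a2 a3 : ℝ) : H →L[ℂ] H :=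
  (a1 : ℂ) • J + (a2 : ℂ) • R + ((a3 : ℂ) * Complex.I) • (J * R)

/-- if a bounded operator `A` is `J_α`-, `J_β`- and `J_γ`-self-adjoint for
three linearly independent unit vectors `α, β, γ`, then `A` is self-adjoint. -/
theorem stmt5 {H : Type*} [NormedAddCommGroup H] [InnerProductSpace ℂ H]
    [CompleteSpace H]
    (J R : H →L[ℂ] H) (hJ : IsSelfAdjoint J) (hR : IsSelfAdjoint R)
    (hJ2 : J * J = 1) (hR2 : R * R = 1) (hJR : J * R = -(R * J))
    (a1 a2 a3 b1 b2 b3 c1 c2 c3 : ℝ)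
    (ha : a1 ^ 2 + a2 ^ 2 + a3 ^ 2 = 1) (hb : b1 ^ 2 + b2 ^ 2 + b3 ^ 2 = 1)
    (hc : c1 ^ 2 + c2 ^ 2 + c3 ^ 2 = 1)
    (hind : LinearIndependent ℝ ![(a1, a2, a3), (b1, b2, b3), (c1, c2, c3)])
    (A : H →L[ℂ] H)
    (h1 : Jvec J R a1 a2 a3 * star A = A * Jvec J R a1 a2 a3)
    (h2 : Jvec J R b1 b2 b3 * star A = A * Jvec J R b1 b2 b3)
    (h3 : Jvec J R c1 c2 c3 * star A = A * Jvec J R c1 c2 c3) :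
    IsSelfAdjoint A := by
  have Jadd : ∀ x1 x2 x3 y1 y2 y3 : ℝ, Jvec J R (x1+y1) (x2+y2) (x3+y3)
      = Jvec J R x1 x2 x3 + Jvec J R y1 y2 y3 := by
    intros x1 x2 x3 y1 y2 y3
    simp only [Jvec]
    push_cast
    simp only [add_smul, add_mul]
    abel
  have Jsmul : ∀ (c x1 x2 x3 : ℝ), Jvec J R (c*x1) (c*x2) (c*x3)
      = (c : ℂ) • Jvec J R x1 x2 x3 := by
    intros c x1 x2 x3
    simp only [Jvec, smul_add, smul_smul]
    push_cast
    ring_nf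
  have hreal_smul : ∀ (c : ℝ) (T : H →L[ℂ] H), c • T = (c : ℂ) • T := by
    intros c T
    ext x
    simp
  let f : (ℝ × ℝ × ℝ) →ₗ[ℝ] (H →L[ℂ] H) :=
    { toFun := fun v => Jvec J R v.1 v.2.1 v.2.2 * star A - A * Jvec J R v.1 v.2.1 v.2.2
      map_add' := fun x y => by
        simp only [Prod.fst_add, Prod.snd_add, Jadd, add_mul, mul_add]
        abel
      map_smul' := fun c x => by
        simp only [Prod.smul_fst, Prod.smul_snd, smul_eq_mul, Jsmul, RingHom.id_apply,
          smul_mul_assoc, mul_smul_comm, smul_sub, hreal_smul] }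
  have hcard : Fintype.card (Fin 3) = Module.finrank ℝ (ℝ × ℝ × ℝ) := by simp
  let b := basisOfLinearIndependentOfCardEqFinrank hind hcard
  have hf : f = 0 := by
    apply b.ext
    intro i
    have hb : b i = ![(a1, a2, a3), (b1, b2, b3), (c1, c2, c3)] i := by
      simp [b, coe_basisOfLinearIndependentOfCardEqFinrank]
    fin_cases i <;> rw [hb]
    · show Jvec J R a1 a2 a3 * star A - A * Jvec J R a1 a2 a3 = _
      rw [h1, sub_self]; rfl
    · show Jvec J R b1 b2 b3 * star A - A * Jvec J R b1 b2 b3 = _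
      rw [h2, sub_self]; rfl
    · show Jvec J R c1 c2 c3 * star A - A * Jvec J R c1 c2 c3 = _
      rw [h3, sub_self]; rfl
  have hv : ∀ x1 x2 x3 : ℝ, Jvec J R x1 x2 x3 * star A = A * Jvec J R x1 x2 x3 := by
    intro x1 x2 x3
    have := congrFun (congrArg (fun g => g.toFun) hf) (x1, x2, x3)
    simpa [sub_eq_zero, f] using this
  have hJr : J * star A = A * J := by
    have := hv 1 0 0
    simpa [Jvec] using this
  have hRr : R * star A = A * R := by
    have := hv 0 1 0
    simpa [Jvec] using this
  have hJRr : (J * R) * star A = A * (J * R) := by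
    have := hv 0 0 1
    simp only [Jvec, Complex.ofReal_zero, zero_smul, zero_add, Complex.ofReal_one, one_mul] at this
    rw [smul_mul_assoc, mul_smul_comm] at this
    exact smul_right_injective _ Complex.I_ne_zero this
  have key : J * (A * R) = J * (star A * R) := by
    calc J * (A * R) = J * (R * star A) := by rw [hRr]
    _ = (J * R) * star A := by rw [mul_assoc]
    _ = A * (J * R) := hJRr
    _ = (A * J) * R := by rw [mul_assoc]
    _ = (J * star A) * R := by rw [hJr]
    _ = J * (star A * R) := by rw [mul_assoc]
  have key2 : A * R = star A * R := by
    have := congrArg (fun T => J * T) key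
    simpa [← mul_assoc, hJ2] using this
  have key3 : A = star A := by
    have := congrArg (fun T => T * R) key2
    simpa [mul_assoc, hR2] using this
  exact key3.symm
end

section
/- Let J_α, J_β be fundamental symmetries constructed from anticommuting J, R via linearly independent unit vectors α, β with α·β ≠ 0, and let J_γ = iJ_αJ_{β'} (with β' the orthogonalized vector) be the associated fundamental symmetry anticommuting with both J_α and J_β. Suppose a (possibly unbounded) densely defined operator A satisfies J_αA = A*J_α and J_βA = A*J_β (as operator equalities including domains). Then A commutes with J_γ: J_γA = AJ_γ. -/
/-- Composition `U ∘ T` of a bounded operator with a partially defined operator. -/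
noncomputable def clmCompPMap {H : Type*} [NormedAddCommGroup H] [InnerProductSpace ℂ H]
    (U : H →L[ℂ] H) (T : H →ₗ.[ℂ] H) : H →ₗ.[ℂ] H :=
  ⟨T.domain, U.toLinearMap.comp T.toFun⟩

/-- Composition `T ∘ U` of a partially defined operator with a bounded operator; its
domain is the preimage of `dom T` under `U`. -/
noncomputable def pmapCompCLM {H : Type*} [NormedAddCommGroup H] [InnerProductSpace ℂ H]
    (T : H →ₗ.[ℂ] H) (U : H →L[ℂ] H) : H →ₗ.[ℂ] H :=
  ⟨T.domain.comap U.toLinearMap,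
    T.toFun.comp (U.toLinearMap.restrict fun _ hx => hx)⟩

theorem jvec_anticomm {H : Type*} [NormedAddCommGroup H] [InnerProductSpace ℂ H]
    (J R : H →L[ℂ] H)
    (hJ2 : J * J = 1) (hR2 : R * R = 1) (hJR : J * R = -(R * J))
    (u1 u2 u3 v1 v2 v3 : ℝ) :
    Jvec J R u1 u2 u3 * Jvec J R v1 v2 v3 + Jvec J R v1 v2 v3 * Jvec J R u1 u2 u3
      = ((2 * (u1 * v1 + u2 * v2 + u3 * v3) : ℝ) : ℂ) • 1 := by
  have hRJ : R * J = -(J * R) := by rw [hJR, neg_neg]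
  have p1 : J * (J * R) = R := by rw [← mul_assoc, hJ2, one_mul]
  have p2 : (J * R) * J = -R := by rw [mul_assoc, hRJ, mul_neg, p1]
  have p3 : R * (J * R) = -J := by
    rw [← mul_assoc, hRJ, neg_mul, mul_assoc, hR2, mul_one]
  have p4 : (J * R) * R = J := by rw [mul_assoc, hR2, mul_one]
  have p5 : (J * R) * (J * R) = -1 := by rw [mul_assoc, p3, mul_neg, hJ2]
  simp only [Jvec, add_mul, mul_add, smul_mul_assoc, mul_smul_comm, smul_smul]
  rw [hJ2, hR2, p1, p2, p3, p4, p5, hRJ]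
  push_cast
  match_scalars
  · linear_combination (-2 * (u3:ℂ) * (v3:ℂ)) * Complex.I_sq
  · ring
  · ring
  · ring


theorem dot_sq_lt_one (a1 a2 a3 b1 b2 b3 : ℝ)
    (ha : a1 ^ 2 + a2 ^ 2 + a3 ^ 2 = 1) (hb : b1 ^ 2 + b2 ^ 2 + b3 ^ 2 = 1)
    (hind : ∀ t : ℝ, (b1, b2, b3) ≠ (t * a1, t * a2, t * a3)) :
    (a1 * b1 + a2 * b2 + a3 * b3) ^ 2 < 1 := by
  set d := a1 * b1 + a2 * b2 + a3 * b3 with hd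
  clear_value d
  have key : (b1 - d*a1)^2 + (b2 - d*a2)^2 + (b3 - d*a3)^2 = 1 - d^2 := by
    have e : (b1 - d*a1)^2 + (b2 - d*a2)^2 + (b3 - d*a3)^2
        = (b1^2+b2^2+b3^2) - 2*d*(a1*b1+a2*b2+a3*b3) + d^2*(a1^2+a2^2+a3^2) := by ring
    rw [e, ha, hb, ← hd]; ring
  have hle : d ^ 2 ≤ 1 := by
    nlinarith [sq_nonneg (b1 - d*a1), sq_nonneg (b2 - d*a2), sq_nonneg (b3 - d*a3)]
  rcases lt_or_eq_of_le hle with h | h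
  · exact h
  · exfalso
    have e1 : b1 = d * a1 := by nlinarith [sq_nonneg (b1 - d*a1), sq_nonneg (b2 - d*a2), sq_nonneg (b3 - d*a3)]
    have e2 : b2 = d * a2 := by nlinarith [sq_nonneg (b1 - d*a1), sq_nonneg (b2 - d*a2), sq_nonneg (b3 - d*a3)]
    have e3 : b3 = d * a3 := by nlinarith [sq_nonneg (b1 - d*a1), sq_nonneg (b2 - d*a2), sq_nonneg (b3 - d*a3)]
    exact hind d (by rw [e1, e2, e3])

theorem stmt11' {H : Type*} [NormedAddCommGroup H] [InnerProductSpace ℂ H]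
    [CompleteSpace H]
    (J R : H →L[ℂ] H) (hJ : IsSelfAdjoint J) (hR : IsSelfAdjoint R)
    (hJ2 : J * J = 1) (hR2 : R * R = 1) (hJR : J * R = -(R * J))
    (a1 a2 a3 b1 b2 b3 : ℝ)
    (ha : a1 ^ 2 + a2 ^ 2 + a3 ^ 2 = 1) (hb : b1 ^ 2 + b2 ^ 2 + b3 ^ 2 = 1)
    (hdot : a1 * b1 + a2 * b2 + a3 * b3 ≠ 0)
    (hind : ∀ t : ℝ, (b1, b2, b3) ≠ (t * a1, t * a2, t * a3))
    (c : ℝ) (hc : c = -1 / (a1 * b1 + a2 * b2 + a3 * b3))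
    (n : ℝ)
    (hn : n = Real.sqrt ((a1 + c * b1) ^ 2 + (a2 + c * b2) ^ 2 + (a3 + c * b3) ^ 2))
    (Jg : H →L[ℂ] H)
    (hJg : Jg = Complex.I •
      (Jvec J R a1 a2 a3 *
        Jvec J R ((a1 + c * b1) / n) ((a2 + c * b2) / n) ((a3 + c * b3) / n)))
    (A : H →ₗ.[ℂ] H) (hdense : Dense (A.domain : Set H))
    (h1 : clmCompPMap (Jvec J R a1 a2 a3) A = pmapCompCLM A.adjoint (Jvec J R a1 a2 a3))
    (h2 : clmCompPMap (Jvec J R b1 b2 b3) A = pmapCompCLM A.adjoint (Jvec J R b1 b2 b3)) :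
    clmCompPMap Jg A = pmapCompCLM A Jg := by
  set Ja := Jvec J R a1 a2 a3 with hJa_def
  set Jb := Jvec J R b1 b2 b3 with hJb_def
  set d : ℝ := a1 * b1 + a2 * b2 + a3 * b3 with hd_def
  clear_value d
  have key := jvec_anticomm J R hJ2 hR2 hJR
  -- J_α² = 1
  have haa : Ja * Ja = 1 := by
    have h := key a1 a2 a3 a1 a2 a3
    rw [show a1*a1+a2*a2+a3*a3 = a1^2+a2^2+a3^2 from by ring, ha] at h
    norm_num at h
    rw [← two_smul ℂ (Ja * Ja)] at h
    exact smul_right_injective _ two_ne_zero h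
  have hbb : Jb * Jb = 1 := by
    have h := key b1 b2 b3 b1 b2 b3
    rw [show b1*b1+b2*b2+b3*b3 = b1^2+b2^2+b3^2 from by ring, hb] at h
    norm_num at h
    rw [← two_smul ℂ (Jb * Jb)] at h
    exact smul_right_injective _ two_ne_zero h
  have habba : Ja * Jb + Jb * Ja = ((2 * d : ℝ) : ℂ) • 1 := by
    have h := key a1 a2 a3 b1 b2 b3
    rw [← hJa_def, ← hJb_def, ← hd_def] at h
    exact h
  -- scalar facts
  have hd0 : d ≠ 0 := hdot
  have hd2lt : d ^ 2 < 1 := by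
    rw [hd_def]; exact dot_sq_lt_one a1 a2 a3 b1 b2 b3 ha hb hind
  have hS : (a1 + c * b1) ^ 2 + (a2 + c * b2) ^ 2 + (a3 + c * b3) ^ 2 = 1 / d ^ 2 - 1 := by
    have expand : (a1 + c * b1) ^ 2 + (a2 + c * b2) ^ 2 + (a3 + c * b3) ^ 2
        = (a1^2+a2^2+a3^2) + 2*c*d + c^2*(b1^2+b2^2+b3^2) := by rw [hd_def]; ring
    rw [expand, ha, hb, hc]
    field_simp
    ring
  have hSpos : (0:ℝ) < 1 / d ^ 2 - 1 := by
    have h1' : (1:ℝ) < 1 / d ^ 2 := one_lt_one_div (by positivity) hd2lt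
    linarith
  have hnpos : 0 < n := by rw [hn, Real.sqrt_pos, hS]; exact hSpos
  have hn0 : n ≠ 0 := ne_of_gt hnpos
  have hn2 : n ^ 2 = 1 / d ^ 2 - 1 := by
    rw [hn, Real.sq_sqrt (by rw [hS]; exact le_of_lt hSpos)] ; exact hS
  -- J_{β'} as a combination
  have hb' : Jvec J R ((a1 + c * b1) / n) ((a2 + c * b2) / n) ((a3 + c * b3) / n)
      = ((n:ℂ))⁻¹ • (Ja + (c:ℂ) • Jb) := by
    rw [hJa_def, hJb_def]
    simp only [Jvec]
    push_cast
    match_scalars <;> ring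
  -- J_γ in terms of M = Ja * Jb
  have hJg' : Jg = (Complex.I * ((n:ℂ))⁻¹) • (1 + (c:ℂ) • (Ja * Jb)) := by
    rw [hJg, hb', mul_smul_comm, mul_add, mul_smul_comm, haa, smul_smul]
  have hJb_Ja : Jb * Ja = ((2 * d : ℝ) : ℂ) • 1 - Ja * Jb := eq_sub_of_add_eq' habba
  have hM2 : (Ja * Jb) * (Ja * Jb) = ((2 * d : ℝ) : ℂ) • (Ja * Jb) - 1 := by
    have e : (Ja * Jb) * (Ja * Jb) = Ja * ((Jb * Ja) * Jb) := by
      rw [mul_assoc, ← mul_assoc Jb Ja Jb]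
    rw [e, hJb_Ja, sub_mul, smul_mul_assoc, one_mul, mul_assoc Ja Jb Jb, hbb, mul_one,
      mul_sub, mul_smul_comm, haa]
  -- complex scalar facts
  have hd0' : (d:ℂ) ≠ 0 := by exact_mod_cast hd0
  have hn0' : (n:ℂ) ≠ 0 := by exact_mod_cast hn0
  have hc' : (c:ℂ) = -1 / (d:ℂ) := by rw [hc]; push_cast; rfl
  have hn2' : (n:ℂ) ^ 2 = 1 / (d:ℂ) ^ 2 - 1 := by exact_mod_cast hn2
  -- J_γ² = 1
  have hJg2 : Jg * Jg = 1 := by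
    rw [hJg', smul_mul_assoc, mul_smul_comm, smul_smul]
    rw [add_mul, one_mul, mul_add, mul_one, mul_smul_comm, smul_mul_assoc, smul_smul, hM2]
    rw [smul_sub]
    match_scalars
    · have e1 : (1 : ℂ) + -((c:ℂ) * (c:ℂ) * 1) = -(n:ℂ)^2 := by
        rw [hc', hn2']; field_simp; ring
      rw [e1]
      have e2 : Complex.I * (↑n)⁻¹ * (Complex.I * (↑n)⁻¹) * -(↑n:ℂ)^2
          = -(Complex.I * Complex.I) * ((↑n)⁻¹ * (↑n:ℂ))^2 := by ring
      rw [e2, inv_mul_cancel₀ hn0', Complex.I_mul_I]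
      norm_num
    · have e3 : (c:ℂ) * 1 + ((c:ℂ) * 1 + (c:ℂ) * (c:ℂ) * (2 * (d:ℂ) * 1)) = 0 := by
        rw [hc']; field_simp; ring
      rw [e3, mul_zero]
  -- pointwise versions
  have hJa2 : ∀ x : H, Ja (Ja x) = x := by
    intro x
    have h := DFunLike.congr_fun haa x
    simpa [ContinuousLinearMap.mul_apply] using h
  have hJb2 : ∀ x : H, Jb (Jb x) = x := by
    intro x
    have h := DFunLike.congr_fun hbb x
    simpa [ContinuousLinearMap.mul_apply] using h
  have hJg2x : ∀ x : H, Jg (Jg x) = x := by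
    intro x
    have h := DFunLike.congr_fun hJg2 x
    simpa [ContinuousLinearMap.mul_apply] using h
  have hJgx : ∀ x : H, Jg x = (Complex.I * ((n:ℂ))⁻¹) • (x + (c:ℂ) • Ja (Jb x)) := by
    intro x
    rw [hJg']
    simp [ContinuousLinearMap.mul_apply]
  -- extract domain and value information from h1, h2
  have hdom1 : A.domain = A.adjoint.domain.comap (Ja : H →ₗ[ℂ] H) :=
    congrArg LinearPMap.domain h1
  have hdom2 : A.domain = A.adjoint.domain.comap (Jb : H →ₗ[ℂ] H) :=
    congrArg LinearPMap.domain h2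
  have mem1 : ∀ x : H, x ∈ A.domain ↔ Ja x ∈ A.adjoint.domain := by
    intro x
    rw [hdom1, Submodule.mem_comap]
    rfl
  have mem2 : ∀ x : H, x ∈ A.domain ↔ Jb x ∈ A.adjoint.domain := by
    intro x
    rw [hdom2, Submodule.mem_comap]
    rfl
  obtain ⟨deq1, feq1⟩ := LinearPMap.ext_iff.1 h1
  obtain ⟨deq2, feq2⟩ := LinearPMap.ext_iff.1 h2
  have val1 : ∀ (x : H) (hx : x ∈ A.domain) (hy : Ja x ∈ A.adjoint.domain),
      Ja (A ⟨x, hx⟩) = A.adjoint ⟨Ja x, hy⟩ := by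
    intro x hx hy
    have hx' : x ∈ (pmapCompCLM A.adjoint Ja).domain := Submodule.mem_comap.mpr hy
    exact feq1 (x := x) (hf := hx) (hg := hx')
  have val2 : ∀ (x : H) (hx : x ∈ A.domain) (hy : Jb x ∈ A.adjoint.domain),
      Jb (A ⟨x, hx⟩) = A.adjoint ⟨Jb x, hy⟩ := by
    intro x hx hy
    have hx' : x ∈ (pmapCompCLM A.adjoint Jb).domain := Submodule.mem_comap.mpr hy
    exact feq2 (x := x) (hf := hx) (hg := hx')
  have mem1' : ∀ y : H, y ∈ A.adjoint.domain → Ja y ∈ A.domain := by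
    intro y hy
    rw [mem1 (Ja y), hJa2]
    exact hy
  have val1' : ∀ (y : H) (hy : y ∈ A.adjoint.domain) (hx : Ja y ∈ A.domain),
      Ja (A.adjoint ⟨y, hy⟩) = A ⟨Ja y, hx⟩ := by
    intro y hy hx
    have hy' : Ja (Ja y) ∈ A.adjoint.domain := by rw [hJa2]; exact hy
    have e := val1 (Ja y) hx hy'
    have e2 : A.adjoint ⟨Ja (Ja y), hy'⟩ = A.adjoint ⟨y, hy⟩ := by
      congr 1
      exact Subtype.ext (hJa2 y)
    rw [e2] at e
    rw [← e, hJa2]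
  have memg : ∀ x : H, x ∈ A.domain → Jg x ∈ A.domain := by
    intro x hx
    rw [hJgx]
    exact Submodule.smul_mem _ _ (Submodule.add_mem _ hx
      (Submodule.smul_mem _ _ (mem1' _ ((mem2 x).1 hx))))
  apply LinearPMap.ext
  · show A.domain = A.domain.comap (Jg : H →ₗ[ℂ] H)
    ext x
    rw [Submodule.mem_comap]
    simp only [ContinuousLinearMap.coe_coe]
    constructor
    · intro hx
      exact memg x hx
    · intro hx
      have h := memg _ hx
      rwa [hJg2x] at h
  · rintro x hx hy
    have hbx : Jb x ∈ A.adjoint.domain := (mem2 x).1 hx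
    have habx : Ja (Jb x) ∈ A.domain := mem1' _ hbx
    have hgx : Jg x ∈ A.domain := memg x hx
    show Jg (A ⟨x, hx⟩) = A ⟨Jg x, hgx⟩
    rw [hJgx]
    rw [val2 x hx hbx, val1' (Jb x) hbx habx]
    have elem : (⟨Jg x, hgx⟩ : A.domain)
        = (Complex.I * ((n:ℂ))⁻¹) • ((⟨x, hx⟩ : A.domain) + (c:ℂ) • ⟨Ja (Jb x), habx⟩) :=
      Subtype.ext (hJgx x)
    rw [elem, LinearPMap.map_smul, LinearPMap.map_add, LinearPMap.map_smul]


/-- if a densely defined operator `A` satisfies `J_αA = A*J_α` and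
`J_βA = A*J_β` (as operator equalities including domains), where `α, β` are linearly
independent unit vectors with `α ⬝ β ≠ 0` and `J_γ = iJ_αJ_{β'}` is built from the
orthogonalized vector `β' = (α + cβ)/|α + cβ|`, `c = -1/(α ⬝ β)`, then `A` commutes with
`J_γ`: `J_γA = AJ_γ`. -/
theorem stmt11 {H : Type*} [NormedAddCommGroup H] [InnerProductSpace ℂ H]
    [CompleteSpace H]
    (J R : H →L[ℂ] H) (hJ : IsSelfAdjoint J) (hR : IsSelfAdjoint R)
    (hJ2 : J * J = 1) (hR2 : R * R = 1) (hJR : J * R = -(R * J))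
    (a1 a2 a3 b1 b2 b3 : ℝ)
    (ha : a1 ^ 2 + a2 ^ 2 + a3 ^ 2 = 1) (hb : b1 ^ 2 + b2 ^ 2 + b3 ^ 2 = 1)
    (hdot : a1 * b1 + a2 * b2 + a3 * b3 ≠ 0)
    (hind : ∀ t : ℝ, (b1, b2, b3) ≠ (t * a1, t * a2, t * a3))
    (c : ℝ) (hc : c = -1 / (a1 * b1 + a2 * b2 + a3 * b3))
    (n : ℝ)
    (hn : n = Real.sqrt ((a1 + c * b1) ^ 2 + (a2 + c * b2) ^ 2 + (a3 + c * b3) ^ 2))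
    (Jg : H →L[ℂ] H)
    (hJg : Jg = Complex.I •
      (Jvec J R a1 a2 a3 *
        Jvec J R ((a1 + c * b1) / n) ((a2 + c * b2) / n) ((a3 + c * b3) / n)))
    (A : H →ₗ.[ℂ] H) (hdense : Dense (A.domain : Set H))
    (h1 : clmCompPMap (Jvec J R a1 a2 a3) A = pmapCompCLM A.adjoint (Jvec J R a1 a2 a3))
    (h2 : clmCompPMap (Jvec J R b1 b2 b3) A = pmapCompCLM A.adjoint (Jvec J R b1 b2 b3)) :
    clmCompPMap Jg A = pmapCompCLM A Jg :=
  stmt11' J R hJ hR hJ2 hR2 hJR a1 a2 a3 b1 b2 b3 ha hb hdot hind c hc n hn Jg hJg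
    A hdense h1 h2
end
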